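/- Let F be a field, P ∈ F[X_1,...,X_d] a polynomial of total degree k_1 + ... + k_d whose coefficient of the monomial X_1^{k_1}···X_d^{k_d} is nonzero. Then for any finite subsets A_1, ..., A_d of F with |A_i| > k_i for all i, there exists a point (a_1,...,a_d) ∈ A_1 × ... × A_d with P(a_1,...,a_d) ≠ 0. -/
import Mathlib

open Polynomial Lagrange Finset

/-- Coefficient of the Lagrange basis polynomial at top degree is the nodal weight. -/
lemma lagrange_basis_top_coeff {F : Type*} [Field F] [DecidableEq F] (B : Finset F) {a : F}
    (ha : a ∈ B) :
    (Lagrange.basis B id a).coeff (B.card - 1) = Lagrange.nodalWeight B id a := by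
  rw [basis_eq_prod_sub_inv_mul_nodal_div ha, ← nodal_erase_eq_nodal_div ha]
  rw [coeff_C_mul]
  have h1 : (nodal (B.erase a) id).natDegree = (B.erase a).card := natDegree_nodal
  have h2 : (B.erase a).card = B.card - 1 := Finset.card_erase_of_mem ha
  have := (nodal_monic (s := B.erase a) (v := (id : F → F))).coeff_natDegree
  rw [h1, h2] at this
  rw [this, mul_one]

/-- The key single-variable power-sum identity for nodal weights. -/
lemma nodal_power_sum {F : Type*} [Field F] [DecidableEq F] (B : Finset F) (m : ℕ)
    (hm : m < B.card) :
    ∑ a ∈ B, a ^ m * Lagrange.nodalWeight B id a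
      = if m = B.card - 1 then 1 else 0 := by
  have hinj : Set.InjOn (id : F → F) B := Function.injective_id.injOn
  have hdeg : (X ^ m : F[X]).degree < B.card := by
    simpa [degree_X_pow] using (by exact_mod_cast hm : ((m : ℕ) : WithBot ℕ) < (B.card : WithBot ℕ))
  have h := Lagrange.eq_interpolate (f := (X ^ m : F[X])) hinj hdeg
  have hc := congrArg (fun q : F[X] => q.coeff (B.card - 1)) h
  simp only [interpolate_apply, Polynomial.finset_sum_coeff, coeff_C_mul, coeff_X_pow] at hc
  have : ∀ a ∈ B, eval (id a) (X ^ m : F[X]) * (Lagrange.basis B id a).coeff (B.card - 1)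
      = a ^ m * Lagrange.nodalWeight B id a := by
    intro a ha
    rw [lagrange_basis_top_coeff B ha]; simp
  rw [Finset.sum_congr rfl this] at hc
  rw [← hc]
  by_cases hmb : m = B.card - 1 <;> simp [hmb, eq_comm]

/-- The grid coefficient formula: the top coefficient of `P` is a weighted sum of the values of
`P` on the grid. -/
lemma grid_coeff_formula {F : Type*} [Field F] [DecidableEq F] {d : ℕ} (k : Fin d → ℕ)
    (B : Fin d → Finset F) (hB : ∀ i, (B i).card = k i + 1)
    (P : MvPolynomial (Fin d) F) (hdeg : P.totalDegree ≤ ∑ i, k i) :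
    ∑ a ∈ Fintype.piFinset B,
        MvPolynomial.eval a P * ∏ i, Lagrange.nodalWeight (B i) id (a i)
      = P.coeff (Finsupp.equivFunOnFinite.symm k) := by
  set k' : (Fin d) →₀ ℕ := Finsupp.equivFunOnFinite.symm k with hk'
  have hk'app : ∀ i, k' i = k i := fun i => rfl
  calc
    ∑ a ∈ Fintype.piFinset B,
        MvPolynomial.eval a P * ∏ i, Lagrange.nodalWeight (B i) id (a i)
      = ∑ a ∈ Fintype.piFinset B, ∑ m ∈ P.support,
          P.coeff m * ∏ i, (a i ^ m i * Lagrange.nodalWeight (B i) id (a i)) := by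
        refine Finset.sum_congr rfl fun a _ => ?_
        rw [MvPolynomial.eval_eq', Finset.sum_mul]
        refine Finset.sum_congr rfl fun m _ => ?_
        rw [mul_assoc, ← Finset.prod_mul_distrib]
    _ = ∑ m ∈ P.support,
          P.coeff m * ∏ i, ∑ b ∈ B i, (b ^ m i * Lagrange.nodalWeight (B i) id b) := by
        rw [Finset.sum_comm]
        refine Finset.sum_congr rfl fun m _ => ?_
        rw [← Finset.mul_sum, Finset.prod_univ_sum]
    _ = ∑ m ∈ P.support, P.coeff m * (if m = k' then 1 else 0) := by
        refine Finset.sum_congr rfl fun m hm => ?_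
        congr 1
        have hsum : ∑ i, m i ≤ ∑ i, k i := by
          refine le_trans ?_ hdeg
          refine le_trans ?_ (MvPolynomial.le_totalDegree hm)
          rw [Finsupp.sum_fintype]
          intro; rfl
        by_cases hall : ∀ i, k i ≤ m i
        · have heq : ∀ i, m i = k i := by
            by_contra hne
            push_neg at hne
            obtain ⟨j, hj⟩ := hne
            have : k j < m j := lt_of_le_of_ne (hall j) (Ne.symm hj)
            have : ∑ i, k i < ∑ i, m i :=
              Finset.sum_lt_sum (fun i _ => hall i) ⟨j, Finset.mem_univ j, this⟩
            omega
          have hmk : m = k' := by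
            ext i; rw [heq i]; rfl
          rw [if_pos hmk]
          refine Finset.prod_eq_one fun i _ => ?_
          rw [hmk, hk'app]
          rw [nodal_power_sum (B i) (k i) (by rw [hB i]; omega), if_pos (by rw [hB i]; omega)]
        · push_neg at hall
          obtain ⟨j, hj⟩ := hall
          have hmk : m ≠ k' := by
            intro h; rw [h] at hj; exact absurd (hk'app j) (by omega)
          rw [if_neg hmk]
          refine Finset.prod_eq_zero (Finset.mem_univ j) ?_
          rw [nodal_power_sum (B j) (m j) (by rw [hB j]; omega),
            if_neg (by rw [hB j]; omega)]
    _ = P.coeff k' := by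
        simp only [mul_ite, mul_one, mul_zero]
        rw [Finset.sum_ite_eq' P.support k' (fun m => P.coeff m)]
        by_cases h : k' ∈ P.support
        · simp [h]
        · rw [if_neg h]
          rw [MvPolynomial.notMem_support_iff] at h
          rw [h]

theorem combinatorial_nullstellensatz {F : Type*} [Field F] (d : ℕ) (k : Fin d → ℕ)
    (P : MvPolynomial (Fin d) F)
    (hdeg : P.totalDegree = ∑ i, k i)
    (hcoeff : P.coeff (Finsupp.equivFunOnFinite.symm k) ≠ 0)
    (A : Fin d → Finset F) (hA : ∀ i, k i < (A i).card) :
    ∃ a : Fin d → F, (∀ i, a i ∈ A i) ∧ MvPolynomial.eval a P ≠ 0 := by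
  classical
  have hB : ∀ i, ∃ B : Finset F, B ⊆ A i ∧ B.card = k i + 1 := fun i =>
    Finset.exists_subset_card_eq (by have := hA i; omega)
  choose B hBA hBcard using hB
  have hsum := grid_coeff_formula k B hBcard P hdeg.le
  have hne : ∑ a ∈ Fintype.piFinset B,
      MvPolynomial.eval a P * ∏ i, Lagrange.nodalWeight (B i) id (a i) ≠ 0 := by
    rw [hsum]; exact hcoeff
  obtain ⟨a, haB, ha⟩ := Finset.exists_ne_zero_of_sum_ne_zero hne
  refine ⟨a, fun i => hBA i (Fintype.mem_piFinset.mp haB i), fun h => ha ?_⟩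
  rw [h, zero_mul]
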